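/- Let n ≥ 1 be an integer and let a₀, a₁, …, aₙ be nonnegative real numbers, not all zero, and let ν be the largest index k with aₖ ≠ 0. For ε > 0 set P(ε) = ∑_{i=0}^{n} C(n,i) (2π)^i ε^{n-i} aᵢ and Q(ε) = ∑_{i=0}^{n-1} C(n-1,i) (2π)^{i+1} ε^{n-1-i} a_{i+1}. Then the ratio n·Q(ε)/P(ε) tends to ν as ε tends to 0 from the right. -/

import Mathlib

open Filter Topology Finset

/-- For `n ≥ 1`, nonnegative reals `a 0, …, a n`, not all zero, with `ν` the
largest index `k ≤ n` such that `a k ≠ 0`, setting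
`P ε = ∑_{i=0}^{n} C(n,i) (2π)^i ε^(n-i) a i` and
`Q ε = ∑_{i=0}^{n-1} C(n-1,i) (2π)^(i+1) ε^(n-1-i) a (i+1)`,
the ratio `n * Q ε / P ε` tends to `ν` as `ε → 0⁺`. -/
theorem stmt_0 (n : ℕ) (hn : 1 ≤ n) (a : ℕ → ℝ) (ha : ∀ i, i ≤ n → 0 ≤ a i)
    (ν : ℕ) (hνn : ν ≤ n) (haν : a ν ≠ 0) (hmax : ∀ k, ν < k → k ≤ n → a k = 0) :
    Filter.Tendsto
      (fun ε : ℝ =>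
        (n : ℝ) *
          (∑ i ∈ Finset.range n,
            ((n - 1).choose i : ℝ) * (2 * Real.pi) ^ (i + 1) * ε ^ (n - 1 - i) * a (i + 1)) /
          (∑ i ∈ Finset.range (n + 1),
            (n.choose i : ℝ) * (2 * Real.pi) ^ i * ε ^ (n - i) * a i))
      (𝓝[>] (0 : ℝ)) (𝓝 (ν : ℝ)) := by
  set c : ℝ := 2 * Real.pi with hc
  have hcpos : 0 < c := by positivity
  set m : ℕ := n - ν with hm
  set Qt : ℝ → ℝ := fun ε =>
    ∑ i ∈ Finset.range n, ((n - 1).choose i : ℝ) * c ^ (i + 1) * ε ^ (ν - 1 - i) * a (i + 1)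
    with hQt
  set Pt : ℝ → ℝ := fun ε =>
    ∑ i ∈ Finset.range (n + 1), (n.choose i : ℝ) * c ^ i * ε ^ (ν - i) * a i with hPt
  -- continuity
  have hQcont : Continuous Qt := by
    apply continuous_finset_sum
    intro i _
    fun_prop
  have hPcont : Continuous Pt := by
    apply continuous_finset_sum
    intro i _
    fun_prop
  -- values at 0
  have hPt0 : Pt 0 = (n.choose ν : ℝ) * c ^ ν * a ν := by
    simp only [hPt]
    rw [Finset.sum_eq_single_of_mem ν (Finset.mem_range.2 (Nat.lt_succ_of_le hνn))]
    · simp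
    · intro i hi hiν
      rcases lt_or_gt_of_ne hiν with h | h
      · have : ν - i ≠ 0 := by omega
        rw [zero_pow this]; ring
      · rw [hmax i h (Nat.lt_succ_iff.mp (Finset.mem_range.mp hi))]; ring
  have hPt0pos : 0 < Pt 0 := by
    rw [hPt0]
    have h1 : 0 < (n.choose ν : ℝ) := by
      exact_mod_cast Nat.choose_pos hνn
    have h2 : 0 < a ν := lt_of_le_of_ne (ha ν hνn) (Ne.symm haν)
    positivity
  -- eventual equality
  have heq : ∀ ε : ℝ, 0 < ε →
      (n : ℝ) *
        (∑ i ∈ Finset.range n, ((n - 1).choose i : ℝ) * c ^ (i + 1) * ε ^ (n - 1 - i) * a (i + 1)) /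
        (∑ i ∈ Finset.range (n + 1), (n.choose i : ℝ) * c ^ i * ε ^ (n - i) * a i)
      = (n : ℝ) * Qt ε / Pt ε := by
    intro ε hε
    have hεm : ε ^ m ≠ 0 := pow_ne_zero _ (ne_of_gt hε)
    have hQ : (∑ i ∈ Finset.range n,
        ((n - 1).choose i : ℝ) * c ^ (i + 1) * ε ^ (n - 1 - i) * a (i + 1)) = ε ^ m * Qt ε := by
      rw [hQt, Finset.mul_sum]
      apply Finset.sum_congr rfl
      intro i hi
      have hi' : i < n := Finset.mem_range.mp hi
      by_cases hai : a (i + 1) = 0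
      · rw [hai]; ring
      · have hile : i + 1 ≤ ν := by
          by_contra h
          exact hai (hmax (i + 1) (by omega) (by omega))
        have : n - 1 - i = m + (ν - 1 - i) := by omega
        rw [this, pow_add]; ring
    have hP : (∑ i ∈ Finset.range (n + 1),
        (n.choose i : ℝ) * c ^ i * ε ^ (n - i) * a i) = ε ^ m * Pt ε := by
      rw [hPt, Finset.mul_sum]
      apply Finset.sum_congr rfl
      intro i hi
      have hi' : i < n + 1 := Finset.mem_range.mp hi
      by_cases hai : a i = 0
      · rw [hai]; ring
      · have hile : i ≤ ν := by
          by_contra h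
          exact hai (hmax i (by omega) (by omega))
        have : n - i = m + (ν - i) := by omega
        rw [this, pow_add]; ring
    rw [hQ, hP, show (n:ℝ) * (ε ^ m * Qt ε) = ε ^ m * ((n:ℝ) * Qt ε) by ring,
      mul_div_mul_left _ _ hεm]
  -- value of Qt at 0
  have hQt0 : (n:ℝ) * Qt 0 / Pt 0 = ν := by
    rcases Nat.eq_zero_or_pos ν with hν0 | hνpos
    · have : Qt 0 = 0 := by
        rw [hQt]
        apply Finset.sum_eq_zero
        intro i hi
        have hi' : i < n := Finset.mem_range.mp hi
        rw [hmax (i + 1) (by omega) (by omega)]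
        ring
      rw [this, hν0]
      simp
    · have hQt0 : Qt 0 = ((n - 1).choose (ν - 1) : ℝ) * c ^ ν * a ν := by
        have hrfl : Qt 0 = ∑ i ∈ Finset.range n,
            ((n - 1).choose i : ℝ) * c ^ (i + 1) * (0:ℝ) ^ (ν - 1 - i) * a (i + 1) := rfl
        rw [hrfl]
        rw [Finset.sum_eq_single_of_mem (ν - 1) (Finset.mem_range.2 (by omega))]
        · have h1 : ν - 1 + 1 = ν := by omega
          rw [h1]
          simp
        · intro i hi hiν
          have hi' : i < n := Finset.mem_range.mp hi
          rcases lt_or_gt_of_ne hiν with h | h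
          · have : ν - 1 - i ≠ 0 := by omega
            rw [zero_pow this]; ring
          · rw [hmax (i + 1) (by omega) (by omega)]; ring
      rw [hQt0, hPt0]
      have hkey : (n : ℝ) * ((n - 1).choose (ν - 1) : ℝ) = (ν : ℝ) * (n.choose ν : ℝ) := by
        have := Nat.add_one_mul_choose_eq (n - 1) (ν - 1)
        have h1 : n - 1 + 1 = n := by omega
        have h2 : ν - 1 + 1 = ν := by omega
        rw [h1, h2] at this
        exact_mod_cast (by rw [this]; ring : (n * (n-1).choose (ν-1) : ℕ) = ν * n.choose ν)
      have hch : (n.choose ν : ℝ) ≠ 0 := by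
        exact_mod_cast (Nat.choose_pos hνn).ne'
      have hcν : c ^ ν ≠ 0 := pow_ne_zero _ (ne_of_gt hcpos)
      field_simp
      linear_combination hkey
  -- finish
  have hlim : Filter.Tendsto (fun ε => (n : ℝ) * Qt ε / Pt ε) (𝓝[>] (0 : ℝ))
      (𝓝 ((n : ℝ) * Qt 0 / Pt 0)) := by
    apply Filter.Tendsto.div
    · exact (tendsto_const_nhds.mul (hQcont.tendsto 0)).mono_left nhdsWithin_le_nhds
    · exact (hPcont.tendsto 0).mono_left nhdsWithin_le_nhds
    · exact ne_of_gt hPt0pos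
  rw [hQt0] at hlim
  refine hlim.congr' ?_
  filter_upwards [self_mem_nhdsWithin] with ε hε
  exact (heq ε hε).symm
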